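/- Let A be an n×n real symmetric matrix with ‖A‖_∞ ≤ 1, and let A_m be the projection of A onto the span of eigenvectors with eigenvalue magnitude less than εn. Then ‖A_m‖_∞ ≤ 1 + 1/ε. -/

import Mathlib

open Matrix Finset

lemma bessel_aux (n r : ℕ) (V : Matrix (Fin n) (Fin r) ℝ) (horth : Vᵀ * V = 1)
    (a : Fin n → ℝ) : ∑ k, (∑ q, a q * V q k)^2 ≤ ∑ q, (a q)^2 := by
  set y : Fin r → ℝ := Vᵀ.mulVec a with hy
  have hyk : ∀ k, y k = ∑ q, a q * V q k := by
    intro k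
    simp [hy, Matrix.mulVec, dotProduct, Matrix.transpose_apply, mul_comm]
  have h1 : a ⬝ᵥ (V *ᵥ y) = y ⬝ᵥ y := by
    rw [Matrix.dotProduct_mulVec, ← Matrix.mulVec_transpose]
  have h2 : (V *ᵥ y) ⬝ᵥ (V *ᵥ y) = y ⬝ᵥ y := by
    rw [Matrix.dotProduct_mulVec, ← Matrix.mulVec_transpose, Matrix.mulVec_mulVec, horth,
      Matrix.one_mulVec]
  have h0 : 0 ≤ ∑ q, (a q - (V *ᵥ y) q)^2 := by positivity
  have hexp : ∑ q, (a q - (V *ᵥ y) q)^2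
      = ∑ q, (a q)^2 - 2 * (a ⬝ᵥ (V *ᵥ y)) + (V *ᵥ y) ⬝ᵥ (V *ᵥ y) := by
    simp only [sub_sq, dotProduct, Finset.sum_add_distrib, Finset.sum_sub_distrib,
      Finset.mul_sum]
    ring_nf
  have hyy : y ⬝ᵥ y = ∑ k, (y k)^2 := by
    simp [dotProduct, sq]
  calc ∑ k, (∑ q, a q * V q k)^2 = y ⬝ᵥ y := by
        rw [hyy]; exact Finset.sum_congr rfl fun k _ => by rw [hyk]
    _ ≤ ∑ q, (a q)^2 := by
        have := h0
        rw [hexp, h1, h2] at this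
        linarith

/-- **Entrywise bound on the middle part `A_m = A - A_o`.**
If `A` is an `n × n` real symmetric matrix with entries bounded by `1` in magnitude,
and `V` has orthonormal columns which are eigenvectors of `A` for exactly the eigenvalues
`lam j` with `|lam j| ≥ ε n` (so `A_o = V * diagonal lam * Vᵀ` is the projection of `A`
onto the outlying eigenspace, and `A_m = A - A_o` the projection onto the span of
eigenvectors with eigenvalue magnitude `< ε n`), then `‖A_m‖_∞ ≤ 1 + 1/ε`. -/
theorem middle_part_entry_bound
    (n r : ℕ) (A : Matrix (Fin n) (Fin n) ℝ) (ε : ℝ)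
    (hA : A.IsHermitian)
    (hbound : ∀ i j, |A i j| ≤ 1)
    (hε : ε ∈ Set.Ioo (0 : ℝ) 1)
    (V : Matrix (Fin n) (Fin r) ℝ) (lam : Fin r → ℝ)
    (horth : Vᵀ * V = 1)
    (heig : ∀ j : Fin r, A.mulVec (fun i => V i j) = fun i => lam j * V i j)
    (hlam : ∀ j : Fin r, ε * n ≤ |lam j|) :
    ∀ i j : Fin n, |(A - V * Matrix.diagonal lam * Vᵀ) i j| ≤ 1 + 1 / ε := by
  intro i j
  obtain ⟨hε0, hε1⟩ := hε
  have hn : (0:ℝ) < n := by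
    have : 0 < n := i.pos
    exact_mod_cast this
  have hεn : 0 < ε * n := mul_pos hε0 hn
  -- key bound 1 : weighted row norms
  have key1 : ∀ p : Fin n, ∑ k, (lam k * V p k)^2 ≤ n := by
    intro p
    have hb := bessel_aux n r V horth (fun q => A p q)
    have hrow : ∀ k, ∑ q, A p q * V q k = lam k * V p k := by
      intro k
      have := congrFun (heig k) p
      simpa [Matrix.mulVec, dotProduct] using this
    have h1 : ∑ k, (lam k * V p k)^2 ≤ ∑ q, (A p q)^2 := by
      calc ∑ k, (lam k * V p k)^2 = ∑ k, (∑ q, A p q * V q k)^2 :=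
            Finset.sum_congr rfl fun k _ => by rw [hrow]
        _ ≤ ∑ q, (A p q)^2 := hb
    have h2 : ∑ q, (A p q)^2 ≤ ∑ _q : Fin n, (1:ℝ) := by
      apply Finset.sum_le_sum
      intro q _
      have := hbound p q
      nlinarith [abs_nonneg (A p q), sq_abs (A p q)]
    simp only [Finset.sum_const, Finset.card_univ, Fintype.card_fin, nsmul_eq_mul, mul_one] at h2
    linarith
  -- the outlier entry bound
  have hM : (V * Matrix.diagonal lam * Vᵀ) i j = ∑ k, lam k * V i k * (lam k * V j k) / lam k := by
    rw [Matrix.mul_assoc, Matrix.mul_apply]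
    apply Finset.sum_congr rfl
    intro k _
    have hlk : lam k ≠ 0 := by
      have := hlam k
      intro h; rw [h] at this; simp at this; nlinarith
    rw [Matrix.mul_apply]
    rw [Finset.sum_eq_single k]
    · simp [Matrix.diagonal, Matrix.transpose_apply]
      field_simp
    · intro b _ hb
      simp [Matrix.diagonal_apply_ne' _ hb]
    · simp
  have habs : |(V * Matrix.diagonal lam * Vᵀ) i j|
      ≤ (1 / (ε * n)) * ∑ k, |lam k * V i k| * |lam k * V j k| := by
    rw [hM]
    calc |∑ k, lam k * V i k * (lam k * V j k) / lam k|
        ≤ ∑ k, |lam k * V i k * (lam k * V j k) / lam k| := Finset.abs_sum_le_sum_abs _ _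
      _ ≤ ∑ k, (1 / (ε * n)) * (|lam k * V i k| * |lam k * V j k|) := by
          apply Finset.sum_le_sum
          intro k _
          have hlk := hlam k
          have hlkpos : 0 < |lam k| := lt_of_lt_of_le hεn hlk
          rw [abs_div, abs_mul]
          rw [div_le_iff₀ hlkpos]
          have h1 : 1 / (ε * n) * (|lam k * V i k| * |lam k * V j k|) * |lam k|
              = (|lam k| / (ε * n)) * (|lam k * V i k| * |lam k * V j k|) := by ring
          rw [h1]
          have h2 : (1:ℝ) ≤ |lam k| / (ε * n) := (one_le_div hεn).mpr hlk
          nlinarith [abs_nonneg (lam k * V i k), abs_nonneg (lam k * V j k),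
            mul_nonneg (abs_nonneg (lam k * V i k)) (abs_nonneg (lam k * V j k))]
      _ = (1 / (ε * n)) * ∑ k, |lam k * V i k| * |lam k * V j k| := by
          rw [Finset.mul_sum]
  -- Cauchy–Schwarz
  have hcs : ∑ k, |lam k * V i k| * |lam k * V j k| ≤ n := by
    have hsq := Finset.sum_mul_sq_le_sq_mul_sq Finset.univ
      (fun k => |lam k * V i k|) (fun k => |lam k * V j k|)
    simp only [sq_abs] at hsq
    have hi := key1 i
    have hj := key1 j
    have hpos : 0 ≤ ∑ k, |lam k * V i k| * |lam k * V j k| :=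
      Finset.sum_nonneg fun k _ => mul_nonneg (abs_nonneg _) (abs_nonneg _)
    nlinarith [Finset.sum_nonneg (fun k (_ : k ∈ Finset.univ) => sq_nonneg (lam k * V i k)),
      Finset.sum_nonneg (fun k (_ : k ∈ Finset.univ) => sq_nonneg (lam k * V j k))]
  have hfin : |(V * Matrix.diagonal lam * Vᵀ) i j| ≤ 1 / ε := by
    calc |(V * Matrix.diagonal lam * Vᵀ) i j|
        ≤ (1 / (ε * n)) * ∑ k, |lam k * V i k| * |lam k * V j k| := habs
      _ ≤ (1 / (ε * n)) * n := by
          apply mul_le_mul_of_nonneg_left hcs (by positivity)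
      _ = 1 / ε := by field_simp
  have := hbound i j
  calc |(A - V * Matrix.diagonal lam * Vᵀ) i j|
      = |A i j - (V * Matrix.diagonal lam * Vᵀ) i j| := by simp [Matrix.sub_apply]
    _ ≤ |A i j| + |(V * Matrix.diagonal lam * Vᵀ) i j| := abs_sub _ _
    _ ≤ 1 + 1 / ε := add_le_add this hfin
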